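/- For every integer n ≥ 1, the generalized Fibonacci polynomial of Fibonacci type satisfies the explicit binomial formula 𝓕ₙ(x) = Σ_{i=0}^{⌊(n−1)/2⌋} C(n−i−1, i) · d(x)^{n−2i−1} · g(x)^{i} for all x ∈ ℝ. -/
import Mathlib


/-- Generalized Fibonacci polynomials of Fibonacci type:
`𝓕₀ = 0`, `𝓕₁ = 1`, `𝓕ₙ = d·𝓕ₙ₋₁ + g·𝓕ₙ₋₂`. -/
noncomputable def GFPF (d g : ℝ → ℝ) : ℕ → ℝ → ℝ
  | 0 => fun _ => 0
  | 1 => fun _ => 1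
  | n + 2 => fun x => d x * GFPF d g (n + 1) x + g x * GFPF d g n x

/-- Full-range sum version (extra terms have zero binomial coefficient). -/
noncomputable def Saux (a b : ℝ) (m : ℕ) : ℝ :=
  ∑ i ∈ Finset.range (m + 1), (Nat.choose (m - i) i : ℝ) * a ^ (m - 2 * i) * b ^ i

lemma Saux_key (a b : ℝ) (m i : ℕ) :
    (Nat.choose (m + 2 - (i + 1)) (i + 1) : ℝ) * a ^ (m + 2 - 2 * (i + 1)) * b ^ (i + 1)
      = a * ((Nat.choose (m + 1 - (i + 1)) (i + 1) : ℝ) * a ^ (m + 1 - 2 * (i + 1)) * b ^ (i + 1))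
        + b * ((Nat.choose (m - i) i : ℝ) * a ^ (m - 2 * i) * b ^ i) := by
  rcases lt_trichotomy m (2 * i) with hc | hc | hc
  · -- all coefficients vanish
    rw [Nat.choose_eq_zero_of_lt (show m + 2 - (i + 1) < i + 1 by omega),
        Nat.choose_eq_zero_of_lt (show m + 1 - (i + 1) < i + 1 by omega),
        Nat.choose_eq_zero_of_lt (show m - i < i by omega)]
    push_cast; ring
  · -- m = 2 * i
    rw [show m + 2 - (i + 1) = i + 1 from by omega,
        Nat.choose_self,
        Nat.choose_eq_zero_of_lt (show m + 1 - (i + 1) < i + 1 by omega),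
        show m - i = i from by omega, Nat.choose_self,
        show m + 2 - 2 * (i + 1) = 0 from by omega,
        show m - 2 * i = 0 from by omega]
    push_cast; ring
  · -- 2 * i < m : Pascal plus clean exponents
    have hpas : Nat.choose (m + 2 - (i + 1)) (i + 1)
        = Nat.choose (m + 1 - (i + 1)) (i + 1) + Nat.choose (m - i) i := by
      obtain ⟨k, hk⟩ : ∃ k, m - i = k + 1 := ⟨m - i - 1, by omega⟩
      rw [show m + 2 - (i + 1) = k + 1 + 1 from by omega,
          show m + 1 - (i + 1) = k + 1 from by omega, hk,
          Nat.choose_succ_succ]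
      exact Nat.add_comm _ _
    obtain ⟨j, hj⟩ : ∃ j, m - 2 * i = j + 1 := ⟨m - 2 * i - 1, by omega⟩
    rw [hpas, hj, show m + 2 - 2 * (i + 1) = j + 1 from by omega,
        show m + 1 - 2 * (i + 1) = j from by omega]
    push_cast; ring

lemma Saux_rec (a b : ℝ) (m : ℕ) :
    Saux a b (m + 2) = a * Saux a b (m + 1) + b * Saux a b m := by
  have hb : b * Saux a b m
      = ∑ i ∈ Finset.range (m + 2),
          b * ((Nat.choose (m - i) i : ℝ) * a ^ (m - 2 * i) * b ^ i) := by
    rw [Saux, Finset.mul_sum, Finset.sum_range_succ (n := m + 1),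
        Nat.choose_eq_zero_of_lt (show m - (m + 1) < m + 1 by omega)]
    push_cast; ring
  have ha : (∑ i ∈ Finset.range (m + 2),
        a * ((Nat.choose (m + 1 - (i + 1)) (i + 1) : ℝ)
          * a ^ (m + 1 - 2 * (i + 1)) * b ^ (i + 1)))
      + a * ((Nat.choose (m + 1 - 0) 0 : ℝ) * a ^ (m + 1 - 2 * 0) * b ^ 0)
      = a * Saux a b (m + 1) := by
    rw [Saux, Finset.mul_sum]
    conv_rhs => rw [Finset.sum_range_succ' (n := m + 1)]
    conv_lhs => rw [Finset.sum_range_succ (n := m + 1)]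
    rw [Nat.choose_eq_zero_of_lt (show m + 1 - (m + 1 + 1) < m + 1 + 1 by omega)]
    push_cast; ring
  rw [Saux, Finset.sum_range_succ' (n := m + 2)]
  have key : ∀ i ∈ Finset.range (m + 2),
      (Nat.choose (m + 2 - (i + 1)) (i + 1) : ℝ) * a ^ (m + 2 - 2 * (i + 1)) * b ^ (i + 1)
      = a * ((Nat.choose (m + 1 - (i + 1)) (i + 1) : ℝ)
          * a ^ (m + 1 - 2 * (i + 1)) * b ^ (i + 1))
        + b * ((Nat.choose (m - i) i : ℝ) * a ^ (m - 2 * i) * b ^ i) :=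
    fun i _ => Saux_key a b m i
  rw [Finset.sum_congr rfl key, Finset.sum_add_distrib, ← ha, ← hb]
  simp only [Nat.sub_zero, Nat.choose_zero_right, Nat.mul_zero, pow_zero, Nat.cast_one]
  ring

lemma gfpf_eq_Saux (d g : ℝ → ℝ) (x : ℝ) : ∀ m, GFPF d g (m + 1) x = Saux (d x) (g x) m := by
  intro m
  induction m using Nat.twoStepInduction with
  | zero => simp [GFPF, Saux]
  | one => simp [GFPF, Saux, Finset.sum_range_succ]
  | more m ih1 ih2 =>
    have h : GFPF d g (m + 1 + 1 + 1) x
        = d x * GFPF d g (m + 1 + 1) x + g x * GFPF d g (m + 1) x := rfl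
    rw [h, ih1, ih2]
    exact (Saux_rec (d x) (g x) m).symm

theorem gfpf_binomial_formula (d g : ℝ → ℝ) (n : ℕ) (hn : 1 ≤ n) (x : ℝ) :
    GFPF d g n x =
      ∑ i ∈ Finset.range ((n - 1) / 2 + 1),
        (Nat.choose (n - i - 1) i : ℝ) * d x ^ (n - 2 * i - 1) * g x ^ i := by
  obtain ⟨m, rfl⟩ : ∃ m, n = m + 1 := ⟨n - 1, by omega⟩
  rw [gfpf_eq_Saux, Saux]
  rw [← Finset.sum_subset (Finset.range_subset_range.mpr (show m / 2 + 1 ≤ m + 1 by omega))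
    (fun i _ hni => by
      simp only [Finset.mem_range, not_lt] at hni
      rw [Nat.choose_eq_zero_of_lt (show m - i < i by omega)]
      push_cast; ring)]
  apply Finset.sum_congr
  · congr 1
  · intro i hi
    simp only [Finset.mem_range] at hi
    rw [show m + 1 - i - 1 = m - i from by omega,
        show m + 1 - 2 * i - 1 = m - 2 * i from by omega]
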